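/- In the Confounded Features model X₁ ~ N(0,1), X₂ = aX₁ + ν₂, Y = bX₁ + cX₂ + ν_Y with ν₂, ν_Y ~ N(0,1) all independent, if the target observes only X₂ (X₁ fully missing), then the optimal linear predictor on X₂ alone has coefficient ab/(a²+1) + c, the target risk of the full source predictor [b, c] restricted to X₂ satisfies r^t(β^s_*) = b² + 1, and Var(Y) = b² + 2abc + a²c² + c² + 1. In particular, setting a = -b/c gives r^t(β^s_*)/Var(Y) = (b²+1)/(c²+1), which can exceed any τ > 1 for suitable b, c. -/

import Mathlib

open MeasureTheory ProbabilityTheory Real Filter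
open scoped ENNReal NNReal

namespace CF17

lemma integrable_exp_half : Integrable (fun x : ℝ => rexp (-x ^ 2 / 2)) := by
  have h := integrable_exp_neg_mul_sq (b := (1:ℝ)/2) (by norm_num)
  convert h using 2 with x
  ring_nf

lemma integrable_mul_exp_half : Integrable (fun x : ℝ => x * rexp (-x ^ 2 / 2)) := by
  have h := integrable_mul_exp_neg_mul_sq (b := (1:ℝ)/2) (by norm_num)
  convert h using 2 with x
  ring_nf

lemma integrable_sq_mul_exp_half : Integrable (fun x : ℝ => x ^ 2 * rexp (-x ^ 2 / 2)) := by
  have h := integrable_rpow_mul_exp_neg_mul_sq (b := (1:ℝ)/2) (by norm_num) (s := 2) (by norm_num)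
  convert h using 2 with x
  rw [show ((2:ℝ) = ((2:ℕ):ℝ)) by norm_num, Real.rpow_natCast]
  ring_nf

lemma hasDerivAt_negexp (x : ℝ) :
    HasDerivAt (fun x : ℝ => -rexp (-x ^ 2 / 2)) (x * rexp (-x ^ 2 / 2)) x := by
  have h1 : HasDerivAt (fun x : ℝ => -x ^ 2 / 2) (-(2 * x ^ 1) / 2) x :=
    (hasDerivAt_pow 2 x).neg.div_const 2
  have h2 := (h1.exp).fun_neg
  exact h2.congr_deriv (by ring)

lemma tendsto_negexp (l : Filter ℝ) (h1 : Tendsto (fun x : ℝ => -x ^ 2 / 2) l atBot) :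
    Tendsto (fun x : ℝ => -rexp (-x ^ 2 / 2)) l (nhds 0) := by
  have := (Real.tendsto_exp_atBot.comp h1).neg
  simpa using this

lemma tendsto_arg_atTop : Tendsto (fun x : ℝ => -x ^ 2 / 2) atTop atBot := by
  have h : Tendsto (fun x : ℝ => x ^ 2) atTop atTop :=
    tendsto_pow_atTop (by norm_num : (2:ℕ) ≠ 0)
  have h2 := (tendsto_neg_atTop_atBot.comp h).atBot_div_const (by norm_num : (0:ℝ) < 2)
  simpa [Function.comp_def, neg_div] using h2

lemma tendsto_arg_atBot : Tendsto (fun x : ℝ => -x ^ 2 / 2) atBot atBot := by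
  have h : Tendsto (fun x : ℝ => x ^ 2) atBot atTop := by
    have h0 : Tendsto (fun x : ℝ => |x| ^ 2) atBot atTop :=
      (tendsto_pow_atTop (by norm_num : (2:ℕ) ≠ 0)).comp tendsto_abs_atBot_atTop
    simpa [Function.comp_def, sq_abs] using h0
  have h2 := (tendsto_neg_atTop_atBot.comp h).atBot_div_const (by norm_num : (0:ℝ) < 2)
  simpa [Function.comp_def, neg_div] using h2

lemma int_exp_half : ∫ x : ℝ, rexp (-x ^ 2 / 2) = √(2 * π) := by
  have h := integral_gaussian ((1:ℝ)/2)
  rw [show π / ((1:ℝ)/2) = 2 * π by ring] at h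
  rw [← h]
  congr 1 with x
  ring_nf

lemma moment1 : ∫ x : ℝ, x * rexp (-x ^ 2 / 2) = 0 := by
  have := integral_of_hasDerivAt_of_tendsto hasDerivAt_negexp integrable_mul_exp_half
    (tendsto_negexp _ tendsto_arg_atBot) (tendsto_negexp _ tendsto_arg_atTop)
  simpa using this

lemma moment2 : ∫ x : ℝ, x ^ 2 * rexp (-x ^ 2 / 2) = √(2 * π) := by
  have h := integral_mul_deriv_eq_deriv_mul_of_integrable
    (u := fun x : ℝ => x) (u' := fun _ => (1:ℝ))
    (v := fun x : ℝ => -rexp (-x ^ 2 / 2)) (v' := fun x : ℝ => x * rexp (-x ^ 2 / 2))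
    (fun x _ => hasDerivAt_id x) (fun x _ => hasDerivAt_negexp x)
    (integrable_sq_mul_exp_half.congr (Filter.Eventually.of_forall fun x => by
      simp [Pi.mul_apply]; ring))
    (integrable_exp_half.neg.congr (Filter.Eventually.of_forall fun x => by
      simp [Pi.mul_apply]))
    (integrable_mul_exp_half.neg.congr (Filter.Eventually.of_forall fun x => by
      simp [Pi.mul_apply]))
  rw [show (∫ x : ℝ, x ^ 2 * rexp (-x ^ 2 / 2)) = ∫ x : ℝ, x * (x * rexp (-x ^ 2 / 2)) by
    congr 1 with x; ring]
  rw [h, ← int_exp_half, ← integral_neg]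
  congr 1 with x
  ring


lemma pdf_eq (x : ℝ) : gaussianPDFReal 0 1 x = (√(2 * π))⁻¹ * rexp (-x ^ 2 / 2) := by
  simp [gaussianPDFReal]

lemma gaussian_one_eq :
    gaussianReal 0 1
      = volume.withDensity (fun x => ((gaussianPDFReal 0 1 x).toNNReal : ℝ≥0∞)) := by
  rw [gaussianReal_of_var_ne_zero 0 one_ne_zero]
  rfl

lemma meas_pdf : Measurable (fun x => (gaussianPDFReal 0 1 x).toNNReal) :=
  (measurable_gaussianPDFReal 0 1).real_toNNReal

lemma integral_gaussian_eq (g : ℝ → ℝ) :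
    ∫ x, g x ∂(gaussianReal 0 1) = ∫ x, gaussianPDFReal 0 1 x * g x := by
  rw [gaussian_one_eq, integral_withDensity_eq_integral_smul meas_pdf g]
  congr 1 with x
  simp [NNReal.smul_def, Real.coe_toNNReal _ (gaussianPDFReal_nonneg _ _ _)]

lemma sqrt_two_pi_ne : √(2 * π) ≠ 0 := by
  positivity

lemma gauss_int_id : ∫ x, x ∂(gaussianReal 0 1) = 0 := by
  rw [integral_gaussian_eq]
  have : (fun x => gaussianPDFReal 0 1 x * x)
      = fun x => (√(2 * π))⁻¹ * (x * rexp (-x ^ 2 / 2)) := by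
    funext x; rw [pdf_eq]; ring
  rw [this, integral_const_mul, moment1, mul_zero]

lemma gauss_int_sq : ∫ x, x ^ 2 ∂(gaussianReal 0 1) = 1 := by
  rw [integral_gaussian_eq]
  have : (fun x => gaussianPDFReal 0 1 x * x ^ 2)
      = fun x => (√(2 * π))⁻¹ * (x ^ 2 * rexp (-x ^ 2 / 2)) := by
    funext x; rw [pdf_eq]; ring
  rw [this, integral_const_mul, moment2, inv_mul_cancel₀ sqrt_two_pi_ne]

lemma gauss_integrable_id : Integrable (fun x => x) (gaussianReal 0 1) := by
  rw [gaussian_one_eq, integrable_withDensity_iff_integrable_smul meas_pdf]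
  exact (integrable_mul_exp_half.const_mul ((√(2 * π))⁻¹)).congr
    (Filter.Eventually.of_forall fun x => by
      show _ = (gaussianPDFReal 0 1 x).toNNReal • _
      rw [NNReal.smul_def, Real.coe_toNNReal _ (gaussianPDFReal_nonneg _ _ _), pdf_eq, smul_eq_mul]; ring)

lemma gauss_integrable_sq : Integrable (fun x : ℝ => x ^ 2) (gaussianReal 0 1) := by
  rw [gaussian_one_eq, integrable_withDensity_iff_integrable_smul meas_pdf]
  exact (integrable_sq_mul_exp_half.const_mul ((√(2 * π))⁻¹)).congr
    (Filter.Eventually.of_forall fun x => by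
      show _ = (gaussianPDFReal 0 1 x).toNNReal • _
      rw [NNReal.smul_def, Real.coe_toNNReal _ (gaussianPDFReal_nonneg _ _ _), pdf_eq, smul_eq_mul]; ring)
end CF17

open CF17


/-- In the Confounded Features model (`X₁ = ν₁`, `X₂ = aX₁ + ν₂`,
`Y = bX₁ + cX₂ + ν_Y`, standard Gaussian independent noises), with the target
observing only `X₂`: the optimal linear predictor on `X₂` alone has coefficient
`ab/(a²+1) + c`; the target risk of the source predictor `[b, c]` restricted to
`X₂` is `b² + 1`; `Var(Y) = b² + 2abc + a²c² + c² + 1`; setting `a = -b/c` gives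
risk ratio `(b²+1)/(c²+1)`, which can exceed any `τ > 1` for suitable `b, c`. -/
theorem confounded_features_nonadaptivity
    {Ω : Type*} [MeasurableSpace Ω] (μ : Measure Ω) [IsProbabilityMeasure μ]
    (ν₁ ν₂ νY : Ω → ℝ) (a b c : ℝ) (hc : c ≠ 0)
    (hν₁ : Measure.map ν₁ μ = gaussianReal 0 1)
    (hν₂ : Measure.map ν₂ μ = gaussianReal 0 1)
    (hνY : Measure.map νY μ = gaussianReal 0 1)
    (hindep : iIndepFun
      ![ν₁, ν₂, νY] μ)
    (X₂ Y : Ω → ℝ)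
    (hX₂ : X₂ = fun ω => a * ν₁ ω + ν₂ ω)
    (hY : Y = fun ω => b * ν₁ ω + c * X₂ ω + νY ω) :
    ((∫ ω, X₂ ω * Y ω ∂μ) / (∫ ω, X₂ ω ^ 2 ∂μ) = a * b / (a ^ 2 + 1) + c) ∧
    (∫ ω, (Y ω - c * X₂ ω) ^ 2 ∂μ = b ^ 2 + 1) ∧
    (variance Y μ = b ^ 2 + 2 * a * b * c + a ^ 2 * c ^ 2 + c ^ 2 + 1) ∧
    (a = -b / c →
      (∫ ω, (Y ω - c * X₂ ω) ^ 2 ∂μ) / variance Y μ = (b ^ 2 + 1) / (c ^ 2 + 1)) ∧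
    (∀ τ : ℝ, 1 < τ → ∃ b' c' : ℝ, c' ≠ 0 ∧ (b' ^ 2 + 1) / (c' ^ 2 + 1) > τ) := by
  -- basic facts for each noise variable
  have gfacts : ∀ ν : Ω → ℝ, Measure.map ν μ = gaussianReal 0 1 →
      AEMeasurable ν μ ∧ Integrable ν μ ∧ Integrable (fun ω => ν ω ^ 2) μ ∧
      (∫ ω, ν ω ∂μ) = 0 ∧ (∫ ω, ν ω ^ 2 ∂μ) = 1 := by
    intro ν hν
    have ham : AEMeasurable ν μ := by
      by_contra h
      rw [Measure.map_of_not_aemeasurable h] at hν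
      exact (IsProbabilityMeasure.ne_zero (gaussianReal 0 1)) hν.symm
    refine ⟨ham, ?_, ?_, ?_, ?_⟩
    · have h1 : Integrable (fun x => x) (Measure.map ν μ) := by
        rw [hν]; exact gauss_integrable_id
      exact (integrable_map_measure aestronglyMeasurable_id ham).mp h1
    · have h1 : Integrable (fun x : ℝ => x ^ 2) (Measure.map ν μ) := by
        rw [hν]; exact gauss_integrable_sq
      exact (integrable_map_measure (measurable_id.pow_const 2).aestronglyMeasurable ham).mp h1
    · have h1 := integral_map ham (f := fun x : ℝ => x) aestronglyMeasurable_id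
      rw [hν, gauss_int_id] at h1
      exact h1.symm
    · have h1 := integral_map ham (f := fun x : ℝ => x ^ 2)
        (measurable_id.pow_const 2).aestronglyMeasurable
      rw [hν, gauss_int_sq] at h1
      exact h1.symm
  obtain ⟨am1, I1, Isq1, E1, Esq1⟩ := gfacts ν₁ hν₁
  obtain ⟨am2, I2, Isq2, E2, Esq2⟩ := gfacts ν₂ hν₂
  obtain ⟨am3, I3, Isq3, E3, Esq3⟩ := gfacts νY hνY
  -- independence of pairs
  have h12 : IndepFun ν₁ ν₂ μ := by
    simpa using hindep.indepFun (show (0 : Fin 3) ≠ 1 by decide)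
  have h13 : IndepFun ν₁ νY μ := by
    simpa using hindep.indepFun (show (0 : Fin 3) ≠ 2 by decide)
  have h23 : IndepFun ν₂ νY μ := by
    simpa using hindep.indepFun (show (1 : Fin 3) ≠ 2 by decide)
  have I12 : Integrable (fun ω => ν₁ ω * ν₂ ω) μ := h12.integrable_mul I1 I2
  have I13 : Integrable (fun ω => ν₁ ω * νY ω) μ := h13.integrable_mul I1 I3
  have I23 : Integrable (fun ω => ν₂ ω * νY ω) μ := h23.integrable_mul I2 I3
  have E12 : ∫ ω, ν₁ ω * ν₂ ω ∂μ = 0 := by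
    have h := h12.integral_mul_eq_mul_integral am1.aestronglyMeasurable am2.aestronglyMeasurable
    rw [show integral μ (ν₁ * ν₂) = ∫ ω, ν₁ ω * ν₂ ω ∂μ from rfl] at h
    rw [h, E1, E2]; ring
  have E13 : ∫ ω, ν₁ ω * νY ω ∂μ = 0 := by
    have h := h13.integral_mul_eq_mul_integral am1.aestronglyMeasurable am3.aestronglyMeasurable
    rw [show integral μ (ν₁ * νY) = ∫ ω, ν₁ ω * νY ω ∂μ from rfl] at h
    rw [h, E1, E3]; ring
  have E23 : ∫ ω, ν₂ ω * νY ω ∂μ = 0 := by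
    have h := h23.integral_mul_eq_mul_integral am2.aestronglyMeasurable am3.aestronglyMeasurable
    rw [show integral μ (ν₂ * νY) = ∫ ω, ν₂ ω * νY ω ∂μ from rfl] at h
    rw [h, E2, E3]; ring
  -- the key second-moment computation
  have key : ∀ p q r s t u : ℝ,
      ∫ ω, (p * ν₁ ω + q * ν₂ ω + r * νY ω) * (s * ν₁ ω + t * ν₂ ω + u * νY ω) ∂μ
        = p * s + q * t + r * u := by
    intro p q r s t u
    have hrw : ∀ ω, (p * ν₁ ω + q * ν₂ ω + r * νY ω) * (s * ν₁ ω + t * ν₂ ω + u * νY ω)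
        = (p * s) * ν₁ ω ^ 2 + ((q * t) * ν₂ ω ^ 2 + ((r * u) * νY ω ^ 2 +
          ((p * t + q * s) * (ν₁ ω * ν₂ ω) + ((p * u + r * s) * (ν₁ ω * νY ω) +
          (q * u + r * t) * (ν₂ ω * νY ω))))) := fun ω => by ring
    rw [integral_congr_ae (Eventually.of_forall hrw)]
    have hadd : ∀ (f g : Ω → ℝ), Integrable f μ → Integrable g μ →
        Integrable (fun ω => f ω + g ω) μ := fun f g hf hg => hf.add hg
    rw [integral_add (Isq1.const_mul _) (hadd _ _ (Isq2.const_mul _) (hadd _ _ (Isq3.const_mul _)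
        (hadd _ _ (I12.const_mul _) (hadd _ _ (I13.const_mul _) (I23.const_mul _))))),
      integral_add (Isq2.const_mul _) (hadd _ _ (Isq3.const_mul _)
        (hadd _ _ (I12.const_mul _) (hadd _ _ (I13.const_mul _) (I23.const_mul _)))),
      integral_add (Isq3.const_mul _)
        (hadd _ _ (I12.const_mul _) (hadd _ _ (I13.const_mul _) (I23.const_mul _))),
      integral_add (I12.const_mul _) (hadd _ _ (I13.const_mul _) (I23.const_mul _)),
      integral_add (I13.const_mul _) (I23.const_mul _),
      integral_const_mul, integral_const_mul, integral_const_mul, integral_const_mul,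
      integral_const_mul, integral_const_mul, Esq1, Esq2, Esq3, E12, E13, E23]
    ring
  -- canonical form of Y
  have hYf : Y = fun ω => (b + c * a) * ν₁ ω + c * ν₂ ω + 1 * νY ω := by
    rw [hY, hX₂]; funext ω; ring
  have part1 : (∫ ω, X₂ ω * Y ω ∂μ) / (∫ ω, X₂ ω ^ 2 ∂μ) = a * b / (a ^ 2 + 1) + c := by
    have eN : ∫ ω, X₂ ω * Y ω ∂μ = a * (b + c * a) + 1 * c + 0 * 1 := by
      rw [show (∫ ω, X₂ ω * Y ω ∂μ) = ∫ ω, (a * ν₁ ω + 1 * ν₂ ω + 0 * νY ω) *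
          ((b + c * a) * ν₁ ω + c * ν₂ ω + 1 * νY ω) ∂μ from
        integral_congr_ae (Eventually.of_forall fun ω => by rw [hX₂, hYf]; ring)]
      exact key a 1 0 (b + c * a) c 1
    have eD : ∫ ω, X₂ ω ^ 2 ∂μ = a * a + 1 * 1 + 0 * 0 := by
      rw [show (∫ ω, X₂ ω ^ 2 ∂μ) = ∫ ω, (a * ν₁ ω + 1 * ν₂ ω + 0 * νY ω) *
          (a * ν₁ ω + 1 * ν₂ ω + 0 * νY ω) ∂μ from
        integral_congr_ae (Eventually.of_forall fun ω => by rw [hX₂]; ring)]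
      exact key a 1 0 a 1 0
    rw [eN, eD]
    have ha : a * a + 1 * 1 + 0 * 0 = a ^ 2 + 1 := by ring
    rw [ha]
    have hpos : a ^ 2 + 1 ≠ 0 := by positivity
    field_simp
    ring
  have part2 : ∫ ω, (Y ω - c * X₂ ω) ^ 2 ∂μ = b ^ 2 + 1 := by
    rw [show (∫ ω, (Y ω - c * X₂ ω) ^ 2 ∂μ) = ∫ ω, (b * ν₁ ω + 0 * ν₂ ω + 1 * νY ω) *
        (b * ν₁ ω + 0 * ν₂ ω + 1 * νY ω) ∂μ from
      integral_congr_ae (Eventually.of_forall fun ω => by rw [hY, hX₂]; ring)]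
    rw [key b 0 1 b 0 1]; ring
  have part3 : variance Y μ = b ^ 2 + 2 * a * b * c + a ^ 2 * c ^ 2 + c ^ 2 + 1 := by
    have memY : MemLp Y 2 μ := by
      rw [hYf]
      have m1 : MemLp ν₁ 2 μ := (memLp_two_iff_integrable_sq am1.aestronglyMeasurable).mpr Isq1
      have m2 : MemLp ν₂ 2 μ := (memLp_two_iff_integrable_sq am2.aestronglyMeasurable).mpr Isq2
      have m3 : MemLp νY 2 μ := (memLp_two_iff_integrable_sq am3.aestronglyMeasurable).mpr Isq3
      exact ((m1.const_mul _).add (m2.const_mul _)).add (m3.const_mul _)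
    have hvar := variance_eq_sub memY
    have eSq : ∫ ω, Y ω ^ 2 ∂μ = (b + c * a) * (b + c * a) + c * c + 1 * 1 := by
      rw [show (∫ ω, Y ω ^ 2 ∂μ) = ∫ ω, ((b + c * a) * ν₁ ω + c * ν₂ ω + 1 * νY ω) *
          ((b + c * a) * ν₁ ω + c * ν₂ ω + 1 * νY ω) ∂μ from
        integral_congr_ae (Eventually.of_forall fun ω => by rw [hYf]; ring)]
      exact key _ _ _ _ _ _
    have eM : ∫ ω, Y ω ∂μ = 0 := by
      rw [hYf]
      beta_reduce
      have hadd : ∀ (f g : Ω → ℝ), Integrable f μ → Integrable g μ →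
          Integrable (fun ω => f ω + g ω) μ := fun f g hf hg => hf.add hg
      rw [integral_add (hadd _ _ (I1.const_mul _) (I2.const_mul _)) (I3.const_mul _),
        integral_add (I1.const_mul _) (I2.const_mul _),
        integral_const_mul, integral_const_mul, integral_const_mul, E1, E2, E3]
      ring
    rw [hvar]
    rw [show (μ[Y ^ 2] : ℝ) = ∫ ω, Y ω ^ 2 ∂μ from rfl,
      show (μ[Y] : ℝ) = ∫ ω, Y ω ∂μ from rfl, eSq, eM]
    ring
  refine ⟨part1, part2, part3, ?_, ?_⟩
  · intro ha
    rw [part2, part3, ha]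
    congr 1
    field_simp
    ring
  · intro τ hτ
    refine ⟨2 * τ, 1, one_ne_zero, ?_⟩
    rw [gt_iff_lt, lt_div_iff₀ (by norm_num : (0:ℝ) < 1 ^ 2 + 1)]
    nlinarith
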